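/- Let Λ, Γ be unital quantum channels on ℂ^d and let id denote the identity channel on d'×d' complex matrices (for any d' ≥ 1). Then d_av^ch(Λ ⊗ id, Γ ⊗ id) = d_av^ch(Λ, Γ), where Λ ⊗ id is the quantum channel on ℂ^{dd'} determined by (Λ ⊗ id)(A ⊗ B) = Λ(A) ⊗ B on Kronecker products. -/

import Mathlib

open Matrix Kronecker ComplexOrder

/-- The Hilbert–Schmidt (Frobenius) norm of a complex matrix. -/
noncomputable def hsNorm {n : Type*} [Fintype n] (A : Matrix n n ℂ) : ℝ :=
  Real.sqrt ((Matrix.trace (Aᴴ * A)).re)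

/-- The (normalized) Choi matrix `J_Λ = (1/d) ∑ᵢⱼ E_ij ⊗ Λ(E_ij)` of a linear map on matrices. -/
noncomputable def choi {n : Type*} [Fintype n] [DecidableEq n]
    (Λ : Matrix n n ℂ →ₗ[ℂ] Matrix n n ℂ) : Matrix (n × n) (n × n) ℂ :=
  ((Fintype.card n : ℂ))⁻¹ •
    ∑ i, ∑ j, (Matrix.single i j (1 : ℂ)) ⊗ₖ Λ (Matrix.single i j (1 : ℂ))

/-- A quantum channel: a completely positive (positive semidefinite Choi matrix)
trace-preserving linear map. -/
def IsChannel {n : Type*} [Fintype n] [DecidableEq n]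
    (Λ : Matrix n n ℂ →ₗ[ℂ] Matrix n n ℂ) : Prop :=
  (choi Λ).PosSemidef ∧ ∀ X, (Λ X).trace = X.trace

/-- The average-case distance between quantum channels,
`(1/2) √(‖J_Λ − J_Γ‖_HS² + ‖(Λ−Γ)(I/d)‖_HS²)`. -/
noncomputable def davCh {n : Type*} [Fintype n] [DecidableEq n]
    (Λ Γ : Matrix n n ℂ →ₗ[ℂ] Matrix n n ℂ) : ℝ :=
  (1 / 2) * Real.sqrt ((hsNorm (choi Λ - choi Γ)) ^ 2 +
    (hsNorm (Λ (((Fintype.card n : ℂ))⁻¹ • 1) - Γ (((Fintype.card n : ℂ))⁻¹ • 1))) ^ 2)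

lemma hsNorm_sq' {n : Type*} [Fintype n] (A : Matrix n n ℂ) :
    hsNorm A ^ 2 = ∑ i, ∑ j, Complex.normSq (A i j) := by
  have h : (Matrix.trace (Aᴴ * A)).re = ∑ i, ∑ j, Complex.normSq (A i j) := by
    rw [Finset.sum_comm]
    simp [Matrix.trace, Matrix.mul_apply, Matrix.diag, Complex.re_sum,
      Matrix.conjTranspose_apply, ← Complex.normSq_eq_conj_mul_self]
  rw [hsNorm, Real.sq_sqrt (by
    rw [h]
    exact Finset.sum_nonneg fun i _ => Finset.sum_nonneg fun j _ => Complex.normSq_nonneg _)]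
  exact h

lemma hsNorm_zero' {n : Type*} [Fintype n] : hsNorm (0 : Matrix n n ℂ) = 0 := by
  simp [hsNorm]

lemma stdBasis_prod' {m n : Type*} [DecidableEq m] [DecidableEq n]
    (i j : m) (i' j' : n) :
    Matrix.single (i,i') (j,j') (1:ℂ) =
      Matrix.single i j 1 ⊗ₖ Matrix.single i' j' 1 := by
  ext ⟨a,a'⟩ ⟨b,b'⟩
  simp [Matrix.single, Matrix.kroneckerMap_apply, ite_and, Prod.ext_iff]
  aesop

lemma choi_apply' {n : Type*} [Fintype n] [DecidableEq n]
    (Λ : Matrix n n ℂ →ₗ[ℂ] Matrix n n ℂ) (i a j b : n) :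
    choi Λ (i,a) (j,b) = (Fintype.card n : ℂ)⁻¹ * Λ (Matrix.single i j 1) a b := by
  simp only [choi, Matrix.smul_apply, Matrix.sum_apply, Matrix.kroneckerMap_apply,
    smul_eq_mul]
  congr 1
  rw [Finset.sum_eq_single i, Finset.sum_eq_single j]
  · simp
  · intro l _ hl; simp [Matrix.single, hl]
  · simp
  · intro k _ hk
    apply Finset.sum_eq_zero
    intro l _
    simp [Matrix.single, hk]
  · simp

lemma choi_key (d d' : ℕ) (hd' : 1 ≤ d')
    (Λ Γ : Matrix (Fin d) (Fin d) ℂ →ₗ[ℂ] Matrix (Fin d) (Fin d) ℂ)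
    (ΛI ΓI : Matrix (Fin d × Fin d') (Fin d × Fin d') ℂ →ₗ[ℂ]
      Matrix (Fin d × Fin d') (Fin d × Fin d') ℂ)
    (hΛI : ∀ (A : Matrix (Fin d) (Fin d) ℂ) (B : Matrix (Fin d') (Fin d') ℂ),
      ΛI (A ⊗ₖ B) = Λ A ⊗ₖ B)
    (hΓI : ∀ (A : Matrix (Fin d) (Fin d) ℂ) (B : Matrix (Fin d') (Fin d') ℂ),
      ΓI (A ⊗ₖ B) = Γ A ⊗ₖ B) :
    hsNorm (choi ΛI - choi ΓI) ^ 2 = hsNorm (choi Λ - choi Γ) ^ 2 := by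
  rw [hsNorm_sq', hsNorm_sq']
  simp only [Fintype.sum_prod_type, Matrix.sub_apply]
  simp only [choi_apply', stdBasis_prod', hΛI, hΓI, Matrix.kroneckerMap_apply,
    ← mul_sub, ← sub_mul, _root_.map_mul]
  simp [Matrix.single, apply_ite Complex.normSq, ite_and, Finset.mul_sum,
    mul_ite, mul_one, mul_zero]
  have h0 : (d' : ℝ) ≠ 0 := Nat.cast_ne_zero.mpr (by omega)
  refine Finset.sum_congr rfl fun _ _ => Finset.sum_congr rfl fun _ _ =>
    Finset.sum_congr rfl fun _ _ => Finset.sum_congr rfl fun _ _ => ?_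
  have key : ∀ c x : ℝ, (d':ℝ) * ((d':ℝ) * ((d':ℝ)⁻¹ * (d':ℝ)⁻¹ * c * x)) = c * x := by
    intro c x
    field_simp
  exact key _ _

theorem statement14 (d d' : ℕ) (hd' : 1 ≤ d')
    (Λ Γ : Matrix (Fin d) (Fin d) ℂ →ₗ[ℂ] Matrix (Fin d) (Fin d) ℂ)
    (hΛ : IsChannel Λ) (hΛu : Λ 1 = 1) (hΓ : IsChannel Γ) (hΓu : Γ 1 = 1)
    (ΛI ΓI : Matrix (Fin d × Fin d') (Fin d × Fin d') ℂ →ₗ[ℂ]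
      Matrix (Fin d × Fin d') (Fin d × Fin d') ℂ)
    (hΛI : ∀ (A : Matrix (Fin d) (Fin d) ℂ) (B : Matrix (Fin d') (Fin d') ℂ),
      ΛI (A ⊗ₖ B) = Λ A ⊗ₖ B)
    (hΓI : ∀ (A : Matrix (Fin d) (Fin d) ℂ) (B : Matrix (Fin d') (Fin d') ℂ),
      ΓI (A ⊗ₖ B) = Γ A ⊗ₖ B) :
    davCh ΛI ΓI = davCh Λ Γ := by
  have hone : (1 : Matrix (Fin d × Fin d') (Fin d × Fin d') ℂ) =
      (1 : Matrix (Fin d) (Fin d) ℂ) ⊗ₖ (1 : Matrix (Fin d') (Fin d') ℂ) := by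
    rw [Matrix.one_kronecker_one]
  have hΛIu : ΛI 1 = 1 := by rw [hone, hΛI, hΛu]
  have hΓIu : ΓI 1 = 1 := by rw [hone, hΓI, hΓu]
  have z1 : ΛI ((Fintype.card (Fin d × Fin d') : ℂ)⁻¹ • 1) -
      ΓI ((Fintype.card (Fin d × Fin d') : ℂ)⁻¹ • 1) = 0 := by
    rw [_root_.map_smul, _root_.map_smul, hΛIu, hΓIu, sub_self]
  have z2 : Λ ((Fintype.card (Fin d) : ℂ)⁻¹ • 1) -
      Γ ((Fintype.card (Fin d) : ℂ)⁻¹ • 1) = 0 := by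
    rw [_root_.map_smul, _root_.map_smul, hΛu, hΓu, sub_self]
  rw [davCh, davCh, z1, z2, hsNorm_zero', hsNorm_zero', choi_key d d' hd' Λ Γ ΛI ΓI hΛI hΓI]
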